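/- arXiv:1901.10945 — 2 statements merged into one kernel-verified Lean document; each statement's English description precedes it below -/
import Mathlib

section
/- Let Λ be an infinite type and let 𝔏 denote the finite subsets (Finsets) of Λ. There exist a linearly ordered field K, a ring homomorphism ι : ℝ →+* K, and a surjective map J : (𝔏 → ℝ) → K such that: (i) J(φ + ψ) = J(φ) + J(ψ) for all nets φ, ψ (pointwise sum); (ii) J(φ · ψ) = J(φ) · J(ψ) (pointwise product); (iii) if there exists λ₀ ∈ 𝔏 such that φ(λ) ≥ ψ(λ) for every λ ⊇ λ₀, then J(φ) ≥ J(ψ); (iv) if there exists λ₀ ∈ 𝔏 and r ∈ ℝ such that φ(λ) = r for every λ ⊇ λ₀, then J(φ) = ι(r); and (v) K is non-Archimedean over ℝ: the element J(λ ↦ 1/(|λ|+1)) is positive and smaller than ι(1/n) for every positive natural number n. -/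
/-- Existence of a field of Euclidean numbers: a linearly ordered field `K` with
an embedding `ι : ℝ →+* K` and a surjective Λ-limit map `J` on nets that is
additive, multiplicative, monotone on eventually-ordered nets, sends eventually
constant nets to the corresponding real, and produces a nonzero infinitesimal
out of the net `λ ↦ 1/(|λ|+1)`. -/
theorem euclidean_numbers_exist (Λ : Type) [Infinite Λ] :
    ∃ (K : Type) (_ : Field K) (_ : LinearOrder K) (_ : IsStrictOrderedRing K) (ι : ℝ →+* K)
      (J : (Finset Λ → ℝ) → K),
      Function.Surjective J ∧
      (∀ φ ψ : Finset Λ → ℝ, J (φ + ψ) = J φ + J ψ) ∧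
      (∀ φ ψ : Finset Λ → ℝ, J (φ * ψ) = J φ * J ψ) ∧
      (∀ φ ψ : Finset Λ → ℝ,
        (∃ lam₀ : Finset Λ, ∀ lam : Finset Λ, lam₀ ⊆ lam → ψ lam ≤ φ lam) →
          J ψ ≤ J φ) ∧
      (∀ (φ : Finset Λ → ℝ) (r : ℝ),
        (∃ lam₀ : Finset Λ, ∀ lam : Finset Λ, lam₀ ⊆ lam → φ lam = r) →
          J φ = ι r) ∧
      (0 < J (fun lam => 1 / ((lam.card : ℝ) + 1)) ∧
        ∀ n : ℕ, 0 < n →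
          J (fun lam => 1 / ((lam.card : ℝ) + 1)) < ι (1 / (n : ℝ))) := by
  have : (Filter.atTop : Filter (Finset Λ)).NeBot := Filter.atTop_neBot
  set U : Ultrafilter (Finset Λ) := Ultrafilter.of Filter.atTop with hU
  have hle : (U : Filter (Finset Λ)) ≤ Filter.atTop := Ultrafilter.of_le _
  refine ⟨Filter.Germ (U : Filter (Finset Λ)) ℝ, inferInstance, inferInstance, inferInstance,
    (Filter.Germ.coeRingHom (U : Filter (Finset Λ))).comp (Pi.constRingHom (Finset Λ) ℝ),
    fun φ => (φ : Filter.Germ (U : Filter (Finset Λ)) ℝ),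
    ?_, ?_, ?_, ?_, ?_, ?_, ?_⟩
  · exact Quot.exists_rep
  · intro φ ψ; rfl
  · intro φ ψ; rfl
  · rintro φ ψ ⟨lam₀, h⟩
    refine Filter.Germ.coe_le.mpr (hle ?_)
    exact Filter.mem_of_superset (Filter.Ici_mem_atTop lam₀) h
  · rintro φ r ⟨lam₀, h⟩
    refine Filter.Germ.coe_eq.mpr (hle ?_)
    exact Filter.mem_of_superset (Filter.Ici_mem_atTop lam₀) h
  · refine Filter.Germ.coe_pos.mpr ?_
    filter_upwards with lam
    positivity
  · intro n hn
    refine Filter.Germ.coe_lt.mpr (hle ?_)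
    obtain ⟨s, hs⟩ := Infinite.exists_subset_card_eq Λ n
    refine Filter.mem_of_superset (Filter.Ici_mem_atTop s) ?_
    intro lam hlam
    have hcard : (n : ℝ) ≤ lam.card := by
      have := Finset.card_le_card hlam
      rw [hs] at this
      exact_mod_cast this
    have h1 : (0:ℝ) < n := by exact_mod_cast hn
    show 1 / ((lam.card : ℝ) + 1) < 1 / (n : ℝ)
    calc 1 / ((lam.card : ℝ) + 1) ≤ 1 / ((n:ℝ) + 1) := by
          apply one_div_le_one_div_of_le (by linarith) (by linarith)
      _ < 1 / (n : ℝ) := by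
          apply one_div_lt_one_div_of_lt h1 (by linarith)
end

section
/- Let V be a finite-dimensional complex inner product space (inner product conjugate-linear in the first argument), let A : V →ₗ[ℂ] V satisfy Re⟪A u, u⟫ ≥ 0 for all u ∈ V, let w ∈ V, τ ∈ ℝ with τ ≤ 0, E ∈ ℝ, and let u ∈ V with ‖u‖ = 1 satisfy A u + (τ : ℂ) • (⟪w, u⟫ • w) = (E : ℂ) • u. Then E ≥ τ · ‖w‖²; in particular, if E < 0 then |E| ≤ |τ| · ‖w‖². -/
open scoped InnerProductSpace in
/-- Energy bound for a normalized eigenstate of the Schrödinger operator with a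
rank-one delta-potential well (`τ ≤ 0`): `E ≥ τ·‖w‖²`; in particular the
allowed negative energies satisfy `|E| ≤ |τ|·‖w‖²`. -/
theorem energy_bound_well {V : Type*} [NormedAddCommGroup V]
    [InnerProductSpace ℂ V] [FiniteDimensional ℂ V]
    (A : V →ₗ[ℂ] V) (hA : ∀ u : V, 0 ≤ (⟪A u, u⟫_ℂ).re)
    (w : V) (τ E : ℝ) (hτ : τ ≤ 0) (u : V) (hu : ‖u‖ = 1)
    (heq : A u + (τ : ℂ) • (⟪w, u⟫_ℂ • w) = (E : ℂ) • u) :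
    τ * ‖w‖ ^ 2 ≤ E ∧ (E < 0 → |E| ≤ |τ| * ‖w‖ ^ 2) := by
  have h1 : ⟪A u + (τ : ℂ) • (⟪w, u⟫_ℂ • w), u⟫_ℂ = ⟪(E : ℂ) • u, u⟫_ℂ := by
    rw [heq]
  have huu : ⟪u, u⟫_ℂ = 1 := by
    rw [inner_self_eq_norm_sq_to_K, hu]; norm_num
  rw [inner_add_left, inner_smul_left, inner_smul_left, inner_smul_left,
    huu, mul_one, Complex.conj_ofReal, Complex.conj_mul', Complex.conj_ofReal] at h1
  have h2 : (⟪A u, u⟫_ℂ).re + τ * ‖⟪w, u⟫_ℂ‖ ^ 2 = E := by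
    have := congrArg Complex.re h1
    simp only [← Complex.ofReal_pow, ← Complex.ofReal_mul,
      Complex.add_re, Complex.ofReal_re] at this
    exact this
  have hcs : ‖⟪w, u⟫_ℂ‖ ≤ ‖w‖ := by
    calc ‖⟪w, u⟫_ℂ‖ ≤ ‖w‖ * ‖u‖ := norm_inner_le_norm w u
    _ = ‖w‖ := by rw [hu, mul_one]
  have hns : ‖⟪w, u⟫_ℂ‖ ^ 2 ≤ ‖w‖ ^ 2 := by
    have := mul_self_le_mul_self (norm_nonneg _) hcs
    simpa [pow_two] using this
  have hmain : τ * ‖w‖ ^ 2 ≤ E := by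
    have h3 : τ * ‖w‖ ^ 2 ≤ τ * ‖⟪w, u⟫_ℂ‖ ^ 2 :=
      mul_le_mul_of_nonpos_left hns hτ
    linarith [hA u]
  refine ⟨hmain, fun hE => ?_⟩
  rw [abs_of_neg hE, abs_of_nonpos hτ]
  nlinarith
end
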